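/- Let a, b, c > 0 with c - a - b > 0. Then the Gauss hypergeometric series F(a,b,c;z) = 1 + (Γ(c)/(Γ(a)Γ(b))) Σ_{k≥1} Γ(a+k)Γ(b+k) z^k / (Γ(c+k) k!) converges at z = 1 and F(a,b,c;1) = Γ(c)Γ(c-a-b)/(Γ(c-a)Γ(c-b)) (Gauss's summation theorem). -/

import Mathlib

open Real

/-- The Gauss hypergeometric series
`F(a,b,c;z) = Σ_{k≥0} (Γ(a+k)Γ(b+k)Γ(c))/(Γ(a)Γ(b)Γ(c+k)) z^k / k!`. -/
noncomputable def hypergeomF (a b c z : ℝ) : ℝ :=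
  ∑' k : ℕ, Real.Gamma (a + k) * Real.Gamma (b + k) * Real.Gamma c /
    (Real.Gamma a * Real.Gamma b * Real.Gamma (c + k)) * z ^ k / (Nat.factorial k)

open MeasureTheory Set

lemma tonelli_helper {f : ℕ → ℝ → ℝ} {S : Set ℝ} (hS : MeasurableSet S)
    (hmeas : ∀ k, AEMeasurable (f k) (volume.restrict S))
    (hnonneg : ∀ k, ∀ x ∈ S, 0 ≤ f k x)
    (hint : ∀ k, IntegrableOn (f k) S)
    {g : ℝ → ℝ} (hgint : IntegrableOn g S)
    (hsum : ∀ x ∈ S, HasSum (fun k => f k x) (g x)) :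
    ∑' k, ENNReal.ofReal (∫ x in S, f k x) = ENNReal.ofReal (∫ x in S, g x) := by
  have hae : ∀ k, 0 ≤ᵐ[volume.restrict S] f k := fun k =>
    (ae_restrict_iff' hS).2 (Filter.Eventually.of_forall (hnonneg k))
  have h1 : ∀ k, ENNReal.ofReal (∫ x in S, f k x)
      = ∫⁻ x in S, ENNReal.ofReal (f k x) := fun k =>
    ofReal_integral_eq_lintegral_ofReal (hint k) (hae k)
  simp_rw [h1]
  rw [← lintegral_tsum fun k => (hmeas k).ennreal_ofReal]
  rw [ofReal_integral_eq_lintegral_ofReal hgint ((ae_restrict_iff' hS).2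
    (Filter.Eventually.of_forall fun x hx => (hsum x hx).nonneg (hnonneg · x hx)))]
  refine setLIntegral_congr_fun hS (fun x hx => ?_)
  rw [← ENNReal.ofReal_tsum_of_nonneg (hnonneg · x hx) (hsum x hx).summable,
    (hsum x hx).tsum_eq]

lemma summable_and_tsum_of_ennreal {g : ℕ → ℝ} (hg : ∀ k, 0 ≤ g k) {L : ℝ} (hL : 0 ≤ L)
    (h : ∑' k, ENNReal.ofReal (g k) = ENNReal.ofReal L) :
    Summable g ∧ ∑' k, g k = L := by
  have hfin : ∑' k, ENNReal.ofReal (g k) ≠ ⊤ := by rw [h]; exact ENNReal.ofReal_ne_top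
  have hsummable : Summable g := by
    have := ENNReal.summable_toReal hfin
    refine this.congr fun k => ?_
    rw [ENNReal.toReal_ofReal (hg k)]
  refine ⟨hsummable, ?_⟩
  have := ENNReal.ofReal_tsum_of_nonneg hg hsummable
  rw [← this] at h
  exact ((ENNReal.ofReal_eq_ofReal_iff (tsum_nonneg hg) hL).1 h)

lemma gamma_exp_integrand_eq {a t s : ℝ} (hs : 0 < s) (k : ℕ) :
    t ^ k / (k.factorial : ℝ) * (Real.exp (-s) * s ^ (a + k - 1))
      = s ^ (a - 1) * Real.exp (-s) * ((t * s) ^ k / (k.factorial : ℝ)) := by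
  have h1 : s ^ (a + k - 1) = s ^ (a - 1) * s ^ (k : ℕ) := by
    rw [← Real.rpow_natCast s k, ← Real.rpow_add hs]
    congr 1
    ring
  rw [h1, mul_pow]
  ring

lemma hasSum_binomial {a t : ℝ} (ha : 0 < a) (ht0 : 0 ≤ t) (ht1 : t < 1) :
    HasSum (fun k : ℕ => Real.Gamma (a + k) / (Real.Gamma a * k.factorial) * t ^ k)
      ((1 - t) ^ (-a)) := by
  have h1t : 0 < 1 - t := by linarith
  set f : ℕ → ℝ → ℝ := fun k s =>
    s ^ (a - 1) * Real.exp (-s) * ((t * s) ^ k / (k.factorial : ℝ)) with hf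
  set g : ℝ → ℝ := fun s => s ^ (a - 1) * Real.exp (-((1 - t) * s)) with hg
  have hak : ∀ k : ℕ, (0 : ℝ) < a + k := fun k => by positivity
  -- pointwise sum
  have hsum : ∀ s ∈ Ioi (0:ℝ), HasSum (fun k => f k s) (g s) := by
    intro s _
    have := (NormedSpace.expSeries_div_hasSum_exp (t * s)).mul_left
      (s ^ (a - 1) * Real.exp (-s))
    rw [← Real.exp_eq_exp_ℝ] at this
    convert this using 1
    · rfl
    rw [hg, mul_assoc, ← Real.exp_add]
    congr 2
    ring
  -- integrability of f k
  have hint : ∀ k, IntegrableOn (f k) (Ioi 0) := by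
    intro k
    exact IntegrableOn.congr_fun
      ((Real.GammaIntegral_convergent (hak k)).const_mul (t ^ k / (k.factorial : ℝ)))
      (fun s hs => gamma_exp_integrand_eq hs k) measurableSet_Ioi
  -- integrability of g
  have hgint : IntegrableOn g (Ioi 0) := by
    have base : IntegrableOn (fun x : ℝ => x ^ (a - 1) * Real.exp (-x)) (Ioi 0) :=
      (Real.GammaIntegral_convergent ha).congr_fun (fun x _ => mul_comm _ _)
        measurableSet_Ioi
    have comp : IntegrableOn (fun s : ℝ =>
        ((1 - t) * s) ^ (a - 1) * Real.exp (-((1 - t) * s))) (Ioi 0) := by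
      have := (integrableOn_Ioi_comp_mul_left_iff
        (fun x : ℝ => x ^ (a - 1) * Real.exp (-x)) 0 h1t).2
      rw [mul_zero] at this
      exact this base
    refine IntegrableOn.congr_fun (comp.const_mul ((1 - t) ^ (1 - a)))
      (fun s hs => ?_) measurableSet_Ioi
    rw [Real.mul_rpow h1t.le (le_of_lt hs), ← mul_assoc, ← mul_assoc,
      ← Real.rpow_add h1t]
    norm_num
    rfl
  -- measurability
  have hmeas : ∀ k, AEMeasurable (f k) (volume.restrict (Ioi 0)) := fun k =>
    (hint k).aemeasurable
  -- value of ∫ f k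
  have hfk : ∀ k, ∫ s in Ioi (0:ℝ), f k s
      = t ^ k / (k.factorial : ℝ) * Real.Gamma (a + k) := by
    intro k
    rw [← setIntegral_congr_fun measurableSet_Ioi
      (fun s hs => gamma_exp_integrand_eq (a := a) hs k),
      MeasureTheory.integral_const_mul, ← Real.Gamma_eq_integral (hak k)]
  -- value of ∫ g
  have hgval : ∫ s in Ioi (0:ℝ), g s = (1 / (1 - t)) ^ a * Real.Gamma a :=
    Real.integral_rpow_mul_exp_neg_mul_Ioi ha h1t
  -- nonneg
  have hnonneg : ∀ k, ∀ s ∈ Ioi (0:ℝ), 0 ≤ f k s := by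
    intro k s hs
    have : (0:ℝ) < s := hs
    positivity
  have key := tonelli_helper measurableSet_Ioi hmeas hnonneg hint hgint hsum
  rw [hgval] at key
  simp_rw [hfk] at key
  obtain ⟨hsummable, htsum⟩ := summable_and_tsum_of_ennreal
    (fun k => by positivity) (by positivity) key
  have hS := hsummable.hasSum
  rw [htsum] at hS
  have hΓ : Real.Gamma a ≠ 0 := (Real.Gamma_pos_of_pos ha).ne'
  have := hS.div_const (Real.Gamma a)
  rw [mul_div_assoc, div_self hΓ, mul_one] at this
  have heq : (fun k : ℕ => t ^ k / (k.factorial : ℝ) * Real.Gamma (a + k)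
      / Real.Gamma a) = fun k : ℕ =>
      Real.Gamma (a + k) / (Real.Gamma a * k.factorial) * t ^ k := by
    funext k; ring
  rw [heq] at this
  have hval : (1 / (1 - t)) ^ a = (1 - t) ^ (-a) := by
    rw [one_div, Real.inv_rpow h1t.le, ← Real.rpow_neg h1t.le]
  rwa [hval] at this

lemma complex_eq_real_on_Icc {u v x : ℝ} (h0 : 0 ≤ x) (h1 : x ≤ 1) :
    (x : ℂ) ^ ((u : ℂ) - 1) * ((1 : ℂ) - x) ^ ((v : ℂ) - 1)
      = ((x ^ (u - 1) * (1 - x) ^ (v - 1) : ℝ) : ℂ) := by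
  rw [Complex.ofReal_mul, Complex.ofReal_cpow h0, Complex.ofReal_cpow (by linarith)]
  push_cast
  ring_nf

lemma betaIntegrable {u v : ℝ} (hu : 0 < u) (hv : 0 < v) :
    IntegrableOn (fun t : ℝ => t ^ (u - 1) * (1 - t) ^ (v - 1)) (Ioo 0 1) := by
  have h := Complex.betaIntegral_convergent (u := u) (v := v) (by simpa) (by simpa)
  rw [intervalIntegrable_iff_integrableOn_Ioc_of_le zero_le_one] at h
  have hre : IntegrableOn (fun x : ℝ =>
      ((x : ℂ) ^ ((u : ℂ) - 1) * ((1 : ℂ) - x) ^ ((v : ℂ) - 1)).re) (Ioc 0 1) := h.re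
  refine ((hre.mono_set Ioo_subset_Ioc_self).congr_fun (fun x hx => ?_) measurableSet_Ioo)
  dsimp only
  rw [complex_eq_real_on_Icc hx.1.le hx.2.le, Complex.ofReal_re]

lemma betaIntegral_real {u v : ℝ} (hu : 0 < u) (hv : 0 < v) :
    ∫ t in Ioo (0:ℝ) 1, t ^ (u - 1) * (1 - t) ^ (v - 1)
      = Real.Gamma u * Real.Gamma v / Real.Gamma (u + v) := by
  have h := Complex.Gamma_mul_Gamma_eq_betaIntegral (s := u) (t := v) (by simpa) (by simpa)
  have hβ : Complex.betaIntegral u v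
      = ((∫ t in Ioo (0:ℝ) 1, t ^ (u - 1) * (1 - t) ^ (v - 1) : ℝ) : ℂ) := by
    rw [Complex.betaIntegral, intervalIntegral.integral_of_le zero_le_one,
      integral_Ioc_eq_integral_Ioo]
    exact (setIntegral_congr_fun measurableSet_Ioo fun x hx =>
      complex_eq_real_on_Icc hx.1.le hx.2.le).trans integral_ofReal
  have hΓ : Real.Gamma (u + v) ≠ 0 := (Real.Gamma_pos_of_pos (by linarith)).ne'
  rw [hβ, Complex.Gamma_ofReal, Complex.Gamma_ofReal, ← Complex.ofReal_add,
    Complex.Gamma_ofReal, ← Complex.ofReal_mul, ← Complex.ofReal_mul,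
    Complex.ofReal_inj] at h
  field_simp [h]
  rw [h]; ring

/-- Gauss's summation theorem: if `c - a - b > 0` the hypergeometric series converges at
`z = 1` and `F(a,b,c;1) = Γ(c)Γ(c-a-b)/(Γ(c-a)Γ(c-b))`. -/
theorem gauss_summation (a b c : ℝ) (ha : 0 < a) (hb : 0 < b) (hc : 0 < c)
    (h : 0 < c - a - b) :
    Summable (fun k : ℕ => Real.Gamma (a + k) * Real.Gamma (b + k) * Real.Gamma c /
        (Real.Gamma a * Real.Gamma b * Real.Gamma (c + k)) * (1 : ℝ) ^ k /
        (Nat.factorial k)) ∧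
      hypergeomF a b c 1 =
        Real.Gamma c * Real.Gamma (c - a - b) /
          (Real.Gamma (c - a) * Real.Gamma (c - b)) := by
  have hcb : (0:ℝ) < c - b := by linarith
  have hca : (0:ℝ) < c - a := by linarith
  set G : ℕ → ℝ := fun k => Real.Gamma (a + k) * Real.Gamma (b + k) * Real.Gamma c /
      (Real.Gamma a * Real.Gamma b * Real.Gamma (c + k)) * (1 : ℝ) ^ k /
      (Nat.factorial k) with hG
  set ψ : ℕ → ℝ → ℝ := fun k t =>
    Real.Gamma (a + k) / (Real.Gamma a * k.factorial) * t ^ k *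
      (t ^ (b - 1) * (1 - t) ^ (c - b - 1)) with hψdef
  set g : ℝ → ℝ := fun t => t ^ (b - 1) * (1 - t) ^ (c - a - b - 1) with hgdef
  have hak : ∀ k : ℕ, (0 : ℝ) < a + k := fun k => by positivity
  have hbk : ∀ k : ℕ, (0 : ℝ) < b + k := fun k => by positivity
  have hck : ∀ k : ℕ, (0 : ℝ) < c + k := fun k => by positivity
  -- pointwise sum
  have hsum : ∀ t ∈ Set.Ioo (0:ℝ) 1, HasSum (fun k => ψ k t) (g t) := by
    intro t ht
    have h1t : (0:ℝ) < 1 - t := by linarith [ht.2]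
    have := (hasSum_binomial ha ht.1.le ht.2).mul_right
      (t ^ (b - 1) * (1 - t) ^ (c - b - 1))
    convert this using 1
    · rfl
    rw [hgdef]
    simp only [← mul_assoc]
    rw [mul_comm ((1 - t) ^ (-a)) (t ^ (b-1)), mul_assoc, ← Real.rpow_add h1t]
    congr 2
    ring
  -- pointwise rewriting of ψ
  have hψeq : ∀ k : ℕ, ∀ t ∈ Set.Ioo (0:ℝ) 1,
      Real.Gamma (a + k) / (Real.Gamma a * k.factorial) *
        (t ^ (b + k - 1) * (1 - t) ^ (c - b - 1)) = ψ k t := by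
    intro k t ht
    have htk : t ^ (b + (k:ℝ) - 1) = t ^ (b - 1) * t ^ (k:ℕ) := by
      rw [← Real.rpow_natCast t k, ← Real.rpow_add ht.1]
      congr 1
      ring
    rw [htk, hψdef]
    ring
  -- integrability
  have hint : ∀ k, MeasureTheory.IntegrableOn (ψ k) (Set.Ioo 0 1) := by
    intro k
    exact MeasureTheory.IntegrableOn.congr_fun
      ((betaIntegrable (by positivity : (0:ℝ) < b + k) hcb).const_mul
        (Real.Gamma (a + k) / (Real.Gamma a * k.factorial)))
      (fun t ht => hψeq k t ht) measurableSet_Ioo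
  have hgint : MeasureTheory.IntegrableOn g (Set.Ioo 0 1) := betaIntegrable hb h
  have hmeas : ∀ k, AEMeasurable (ψ k) (MeasureTheory.volume.restrict (Set.Ioo 0 1)) :=
    fun k => (hint k).aemeasurable
  have hnonneg : ∀ k, ∀ t ∈ Set.Ioo (0:ℝ) 1, 0 ≤ ψ k t := by
    intro k t ht
    have h0 : (0:ℝ) < t := ht.1
    have h1 : (0:ℝ) < 1 - t := by linarith [ht.2]
    have := hak k
    rw [hψdef]
    positivity
  -- values of integrals
  have hψval : ∀ k : ℕ, ∫ t in Set.Ioo (0:ℝ) 1, ψ k t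
      = Real.Gamma (a + k) / (Real.Gamma a * k.factorial) *
        (Real.Gamma (b + k) * Real.Gamma (c - b) / Real.Gamma (c + k)) := by
    intro k
    rw [← MeasureTheory.setIntegral_congr_fun measurableSet_Ioo
      (fun t ht => hψeq k t ht), MeasureTheory.integral_const_mul,
      betaIntegral_real (by positivity : (0:ℝ) < b + k) hcb]
    have : b + (k:ℝ) + (c - b) = c + k := by ring
    rw [this]
  have hgval : ∫ t in Set.Ioo (0:ℝ) 1, g t
      = Real.Gamma b * Real.Gamma (c - a - b) / Real.Gamma (c - a) := by
    rw [hgdef]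
    have := betaIntegral_real hb h
    rw [show b + (c - a - b) = c - a by ring] at this
    exact this
  have key := tonelli_helper measurableSet_Ioo hmeas hnonneg hint hgint hsum
  rw [hgval] at key
  simp_rw [hψval] at key
  -- relate G to the integrals
  have hΓb := Real.Gamma_pos_of_pos hb
  have hΓa := Real.Gamma_pos_of_pos ha
  have hΓcb := Real.Gamma_pos_of_pos hcb
  have hC : (0:ℝ) ≤ Real.Gamma c / (Real.Gamma b * Real.Gamma (c - b)) := by positivity
  have hGk : ∀ k : ℕ, G k = Real.Gamma c / (Real.Gamma b * Real.Gamma (c - b)) *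
      (Real.Gamma (a + k) / (Real.Gamma a * k.factorial) *
        (Real.Gamma (b + k) * Real.Gamma (c - b) / Real.Gamma (c + k))) := by
    intro k
    have h1 := (Real.Gamma_pos_of_pos (hck k)).ne'
    have h2 : (k.factorial : ℝ) ≠ 0 := Nat.cast_ne_zero.2 (Nat.factorial_pos k).ne'
    rw [hG]
    field_simp
    ring
  have key2 : ∑' k, ENNReal.ofReal (G k)
      = ENNReal.ofReal (Real.Gamma c * Real.Gamma (c - a - b) /
          (Real.Gamma (c - a) * Real.Gamma (c - b))) := by
    have hterm : ∀ k : ℕ, ENNReal.ofReal (G k)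
        = ENNReal.ofReal (Real.Gamma c / (Real.Gamma b * Real.Gamma (c - b))) *
          ENNReal.ofReal (Real.Gamma (a + k) / (Real.Gamma a * k.factorial) *
            (Real.Gamma (b + k) * Real.Gamma (c - b) / Real.Gamma (c + k))) := fun k => by
          rw [hGk k, ENNReal.ofReal_mul hC]
    calc ∑' k : ℕ, ENNReal.ofReal (G k)
        = ∑' k : ℕ, ENNReal.ofReal (Real.Gamma c / (Real.Gamma b * Real.Gamma (c - b))) *
          ENNReal.ofReal (Real.Gamma (a + k) / (Real.Gamma a * (k.factorial : ℝ)) *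
            (Real.Gamma (b + k) * Real.Gamma (c - b) / Real.Gamma (c + k))) :=
          tsum_congr hterm
      _ = ENNReal.ofReal (Real.Gamma c / (Real.Gamma b * Real.Gamma (c - b))) *
          ENNReal.ofReal (Real.Gamma b * Real.Gamma (c - a - b) / Real.Gamma (c - a)) := by
          rw [ENNReal.tsum_mul_left, key]
      _ = ENNReal.ofReal (Real.Gamma c / (Real.Gamma b * Real.Gamma (c - b)) *
          (Real.Gamma b * Real.Gamma (c - a - b) / Real.Gamma (c - a))) :=
          (ENNReal.ofReal_mul hC).symm
      _ = ENNReal.ofReal (Real.Gamma c * Real.Gamma (c - a - b) /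
          (Real.Gamma (c - a) * Real.Gamma (c - b))) := by
          congr 1
          have h3 := (Real.Gamma_pos_of_pos hca).ne'
          field_simp
  have hGnonneg : ∀ k : ℕ, 0 ≤ G k := by
    intro k
    have := hak k; have := hbk k; have := hck k
    rw [hG]
    positivity
  obtain ⟨hsummable, htsum⟩ := summable_and_tsum_of_ennreal hGnonneg
    (by positivity) key2
  exact ⟨hsummable, htsum⟩
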